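/- arXiv:2206.00526 — 2 statements merged into one kernel-verified Lean document; each statement's English description precedes it below -/
import Mathlib

section
/- Let f be a flow over time repeated during [θ₁, θ₂] and let B be a cycle in N_{φ(f)} with τ(B) = 0 and h := h_{φ(f)}(B). Augmenting f simultaneously along all liftings C_i = lift(B, i) for i ∈ {θ₁, ..., θ₂ − h} yields a flow over time f' that is repeated during [θ₁ + h, θ₂ − h], and the projection satisfies φ(f') = φ(f) + u(B)·χ^B. -/
/-- A chain of arcs from `p` to `q`: each arc's tail matches the current vertex. -/
def ArcChain {W E : Type*} (tl hd : E → W) : W → W → List E → Prop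
  | p, q, [] => p = q
  | p, q, e :: l => tl e = p ∧ ArcChain tl hd (hd e) q l

/-- A flow over time network: directed multigraph, source, sink, integral capacities and
transit times. -/
structure FOTN (V A : Type*) where
  tail : A → V
  head : A → V
  s : V
  t : V
  u : A → ℤ
  τ : A → ℕ

/-- Transit times extended to residual (backward) arcs by negation. -/
def resTT {A : Type*} (τ : A → ℕ) : A ⊕ A → ℤ :=
  Sum.elim (fun a => (τ a : ℤ)) (fun a => -(τ a : ℤ))

/-- Costs extended to residual (backward) arcs by negation. -/
def resC {A : Type*} (c : A → ℤ) : A ⊕ A → ℤ := Sum.elim c (fun a => -c a)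

/-- Base arc of a residual arc. -/
def arcBase {A : Type*} : A ⊕ A → A := Sum.elim id id

/-- The partial (prefix) sums of `g` along a list, starting with `0`. -/
def psums {E : Type*} (g : E → ℤ) : List E → List ℤ
  | [] => [0]
  | e :: l => 0 :: (psums g l).map (fun z => g e + z)

/-- Minimum partial sum `h⁻` (`0` is itself always a partial sum). -/
def hlo {E : Type*} (g : E → ℤ) (l : List E) : ℤ := (psums g l).foldr min 0

/-- Maximum partial sum `h⁺`. -/
def hhi {E : Type*} (g : E → ℤ) (l : List E) : ℤ := (psums g l).foldr max 0

/-- The height of a walk: `h⁺ - h⁻`. -/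
def spreadOf {E : Type*} (g : E → ℤ) (l : List E) : ℤ := hhi g l - hlo g l

/-- Lift a list of residual arcs starting at (integer) time `t`; each arc `e` is assigned
the layer of the copy it traverses, i.e. the smaller of its two endpoint times. -/
def liftFrom {E : Type*} (g : E → ℤ) : ℤ → List E → List (E × ℕ)
  | _, [] => []
  | t, e :: l => (e, (t + min 0 (g e)).toNat) :: liftFrom g (t + g e) l

/-- The lifting of a walk to layer `θ'`: start at time `max θ' (θ' - h⁻)`. -/
def liftW {E : Type*} (g : E → ℤ) (l : List E) (θ' : ℕ) : List (E × ℕ) :=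
  liftFrom g ((θ' : ℤ) - min 0 (hlo g l)) l

namespace FOTN
variable {V A : Type*} (N : FOTN V A)

/-- Tail of a residual arc in the base network. -/
def bTail : A ⊕ A → V := Sum.elim N.tail N.head

def bHead : A ⊕ A → V := Sum.elim N.head N.tail

/-- Residual capacity in the base network with respect to a static flow `x`. -/
def bCap (x : A → ℤ) : A ⊕ A → ℤ := Sum.elim (fun a => N.u a - x a) x

/-- A walk in the residual network `N_x` of the base network. -/
def IsResWalk (x : A → ℤ) (p q : V) (l : List (A ⊕ A)) : Prop :=
  ArcChain N.bTail N.bHead p q l ∧ ∀ e ∈ l, 0 < N.bCap x e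

/-- A cycle in the residual network `N_x` of the base network. -/
def IsResCycle (x : A → ℤ) (p : V) (l : List (A ⊕ A)) : Prop :=
  N.IsResWalk x p p l ∧ l ≠ [] ∧ (l.map N.bHead).Nodup

/-- Tail of a residual time-expanded arc `(e, ℓ)`: the copy `a^ℓ` of `a` goes from layer
`ℓ` to layer `ℓ + τ(a)`; backward arcs are reversed. -/
def teTail : (A ⊕ A) × ℕ → V × ℕ
  | (Sum.inl a, ℓ) => (N.tail a, ℓ)
  | (Sum.inr a, ℓ) => (N.head a, ℓ + N.τ a)

def teHead : (A ⊕ A) × ℕ → V × ℕ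
  | (Sum.inl a, ℓ) => (N.head a, ℓ + N.τ a)
  | (Sum.inr a, ℓ) => (N.tail a, ℓ)

/-- Residual capacity of a time-expanded residual arc with respect to a flow over time. -/
def teCap (f : A → ℕ → ℤ) : (A ⊕ A) × ℕ → ℤ
  | (Sum.inl a, ℓ) => N.u a - f a ℓ
  | (Sum.inr a, ℓ) => f a ℓ

/-- The arc lies between layers `θ₁` and `θ₂` of the time-expanded network. -/
def InLayers (θ₁ θ₂ : ℕ) (e : (A ⊕ A) × ℕ) : Prop :=
  θ₁ ≤ e.2 ∧ e.2 + N.τ (arcBase e.1) ≤ θ₂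

/-- Membership in the residual time-expanded network `N^{[θ₁,θ₂]}_f`. -/
def InResTEN (f : A → ℕ → ℤ) (θ₁ θ₂ : ℕ) (e : (A ⊕ A) × ℕ) : Prop :=
  0 < N.teCap f e ∧ N.InLayers θ₁ θ₂ e

/-- A walk in the residual time-expanded network `N^{[θ₁,θ₂]}_f`. -/
def IsTENWalk (f : A → ℕ → ℤ) (θ₁ θ₂ : ℕ) (p q : V × ℕ) (l : List ((A ⊕ A) × ℕ)) : Prop :=
  ArcChain N.teTail N.teHead p q l ∧ ∀ e ∈ l, N.InResTEN f θ₁ θ₂ e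

/-- A cycle in the residual time-expanded network `N^{[θ₁,θ₂]}_f`. -/
def IsTENCycle (f : A → ℕ → ℤ) (θ₁ θ₂ : ℕ) (p : V × ℕ) (l : List ((A ⊕ A) × ℕ)) : Prop :=
  N.IsTENWalk f θ₁ θ₂ p p l ∧ l ≠ [] ∧ (l.map N.teHead).Nodup

/-- A flow over time with time horizon `θ`, as a static flow in the time-expanded
network: capacities, support on the existing copies `a^ℓ`, `ℓ ∈ {1,…,θ-1}`, and flow
conservation at every node other than the super-terminals (i.e. at all `v ≠ s, t`). -/
def IsFlowOverTime [Fintype A] [DecidableEq V] (f : A → ℕ → ℤ) (θ : ℕ) : Prop :=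
  (∀ a ℓ, 0 ≤ f a ℓ ∧ f a ℓ ≤ N.u a) ∧
  (∀ a ℓ, ¬(1 ≤ ℓ ∧ ℓ + 1 ≤ θ) → f a ℓ = 0) ∧
  (∀ v, v ≠ N.s → v ≠ N.t → ∀ ℓ : ℕ,
    (∑ a : A, if N.head a = v then f a (ℓ - N.τ a) else 0) =
    (∑ a : A, if N.tail a = v then f a ℓ else 0))

/-- `f` is repeated during `[θ₁, θ₂]`. -/
def Repeated (_Nw : FOTN V A) (f : A → ℕ → ℤ) (θ₁ θ₂ : ℕ) : Prop :=
  ∀ a : A, ∀ ℓ : ℕ, θ₁ ≤ ℓ → ℓ < θ₂ → f a ℓ = f a (ℓ + 1)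

/-- The projection `φ(f)(a) := f(a^{θ₁})`. -/
def proj (_Nw : FOTN V A) (f : A → ℕ → ℤ) (θ₁ : ℕ) : A → ℤ := fun a => f a θ₁

end FOTN

section AuxLemmas
variable {E : Type*}

theorem foldr_min_le_init (b : ℤ) (L : List ℤ) : L.foldr min b ≤ b := by
  induction L with
  | nil => simp
  | cons x xs ih => exact le_trans (min_le_right _ _) ih

theorem foldr_min_le_mem {a : ℤ} {L : List ℤ} (h : a ∈ L) (b : ℤ) : L.foldr min b ≤ a := by
  induction L with
  | nil => simp at h
  | cons x xs ih =>
    rcases List.mem_cons.1 h with rfl | h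
    · exact min_le_left _ _
    · exact le_trans (min_le_right _ _) (ih h)

theorem foldr_min_eq_or_mem (b : ℤ) (L : List ℤ) : L.foldr min b = b ∨ L.foldr min b ∈ L := by
  induction L with
  | nil => left; rfl
  | cons x xs ih =>
    simp only [List.foldr_cons]
    rcases le_total x (xs.foldr min b) with hx | hx
    · right; rw [min_eq_left hx]; exact List.mem_cons_self
    · rcases ih with h | h
      · left; rw [min_eq_right hx]; exact h
      · right; rw [min_eq_right hx]; exact List.mem_cons_of_mem _ h

theorem le_foldr_max_init (b : ℤ) (L : List ℤ) : b ≤ L.foldr max b := by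
  induction L with
  | nil => simp
  | cons x xs ih => exact le_trans ih (le_max_right _ _)

theorem mem_le_foldr_max {a : ℤ} {L : List ℤ} (h : a ∈ L) (b : ℤ) : a ≤ L.foldr max b := by
  induction L with
  | nil => simp at h
  | cons x xs ih =>
    rcases List.mem_cons.1 h with rfl | h
    · exact le_max_left _ _
    · exact le_trans (ih h) (le_max_right _ _)

theorem foldr_max_eq_or_mem (b : ℤ) (L : List ℤ) : L.foldr max b = b ∨ L.foldr max b ∈ L := by
  induction L with
  | nil => left; rfl
  | cons x xs ih =>
    simp only [List.foldr_cons]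
    rcases le_total x (xs.foldr max b) with hx | hx
    · rcases ih with h | h
      · left; rw [max_eq_right hx]; exact h
      · right; rw [max_eq_right hx]; exact List.mem_cons_of_mem _ h
    · right; rw [max_eq_left hx]; exact List.mem_cons_self

theorem zero_mem_psums (g : E → ℤ) (l : List E) : (0:ℤ) ∈ psums g l := by
  cases l <;> simp [psums]

theorem hlo_nonpos (g : E → ℤ) (l : List E) : hlo g l ≤ 0 := foldr_min_le_init _ _
theorem hhi_nonneg (g : E → ℤ) (l : List E) : 0 ≤ hhi g l := le_foldr_max_init _ _

theorem hlo_le_of_mem {g : E → ℤ} {l : List E} {a : ℤ} (h : a ∈ psums g l) : hlo g l ≤ a :=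
  foldr_min_le_mem h 0

theorem le_hhi_of_mem {g : E → ℤ} {l : List E} {a : ℤ} (h : a ∈ psums g l) : a ≤ hhi g l :=
  mem_le_foldr_max h 0

theorem hlo_cons_le_fst (g : E → ℤ) (e : E) (l : List E) : hlo g (e :: l) ≤ g e := by
  have hm : g e + 0 ∈ psums g (e :: l) := by
    show g e + 0 ∈ 0 :: (psums g l).map (fun z => g e + z)
    exact List.mem_cons_of_mem _ (List.mem_map.2 ⟨0, zero_mem_psums g l, rfl⟩)
  simpa using hlo_le_of_mem hm

theorem hlo_cons_le_add (g : E → ℤ) (e : E) (l : List E) :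
    hlo g (e :: l) ≤ g e + hlo g l := by
  rcases foldr_min_eq_or_mem 0 (psums g l) with h | h
  · have : hlo g l = 0 := h
    rw [this, add_zero]; exact hlo_cons_le_fst g e l
  · have hm : g e + hlo g l ∈ psums g (e :: l) := by
      show _ ∈ 0 :: (psums g l).map (fun z => g e + z)
      exact List.mem_cons_of_mem _ (List.mem_map.2 ⟨hlo g l, h, rfl⟩)
    exact hlo_le_of_mem hm

theorem hhi_cons_ge_add (g : E → ℤ) (e : E) (l : List E) :
    g e + hhi g l ≤ hhi g (e :: l) := by
  rcases foldr_max_eq_or_mem 0 (psums g l) with h | h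
  · have h0 : hhi g l = 0 := h
    rw [h0, add_zero]
    have hm : g e + 0 ∈ psums g (e :: l) := by
      show g e + 0 ∈ 0 :: (psums g l).map (fun z => g e + z)
      exact List.mem_cons_of_mem _ (List.mem_map.2 ⟨0, zero_mem_psums g l, rfl⟩)
    simpa using le_hhi_of_mem hm
  · have hm : g e + hhi g l ∈ psums g (e :: l) := by
      show _ ∈ 0 :: (psums g l).map (fun z => g e + z)
      exact List.mem_cons_of_mem _ (List.mem_map.2 ⟨hhi g l, h, rfl⟩)
    exact le_hhi_of_mem hm

theorem hlo_cons_le_min (g : E → ℤ) (e : E) (l : List E) :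
    hlo g (e :: l) ≤ min 0 (g e) :=
  le_min (hlo_nonpos g _) (hlo_cons_le_fst g e l)

theorem spread_nonneg (g : E → ℤ) (l : List E) : 0 ≤ spreadOf g l := by
  have := hlo_nonpos g l; have := hhi_nonneg g l
  unfold spreadOf; omega

theorem liftFrom_map_fst (g : E → ℤ) (l : List E) :
    ∀ t, (liftFrom g t l).map Prod.fst = l := by
  induction l with
  | nil => intro t; rfl
  | cons e l ih => intro t; simp [liftFrom, ih]

theorem liftFrom_bounds (g : E → ℤ) (l : List E) :
    ∀ t : ℤ, 0 ≤ t + hlo g l →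
      ∀ p ∈ liftFrom g t l, t + hlo g l ≤ (p.2 : ℤ) ∧ (p.2 : ℤ) ≤ t + hhi g l := by
  induction l with
  | nil => intro t _ p hp; simp [liftFrom] at hp
  | cons e l ih =>
    intro t ht p hp
    have h1 : hlo g (e :: l) ≤ min 0 (g e) := hlo_cons_le_min g e l
    have h2 : hlo g (e :: l) ≤ g e + hlo g l := hlo_cons_le_add g e l
    have h3 : g e + hhi g l ≤ hhi g (e :: l) := hhi_cons_ge_add g e l
    have h4 : 0 ≤ hhi g (e :: l) := hhi_nonneg g _
    rcases List.mem_cons.1 hp with rfl | hp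
    · have hnn : 0 ≤ t + min 0 (g e) := by omega
      have hc : (((t + min 0 (g e)).toNat : ℤ)) = t + min 0 (g e) := Int.toNat_of_nonneg hnn
      constructor
      · show t + hlo g (e :: l) ≤ ((t + min 0 (g e)).toNat : ℤ)
        rw [hc]; omega
      · show ((t + min 0 (g e)).toNat : ℤ) ≤ t + hhi g (e :: l)
        rw [hc]
        have : min 0 (g e) ≤ 0 := min_le_left _ _
        omega
    · have := ih (t + g e) (by omega) p hp
      constructor
      · omega
      · omega

theorem liftFrom_shift (g : E → ℤ) (l : List E) :
    ∀ t : ℤ, 0 ≤ t + hlo g l →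
      liftFrom g (t + 1) l = (liftFrom g t l).map (fun p => (p.1, p.2 + 1)) := by
  induction l with
  | nil => intro t _; rfl
  | cons e l ih =>
    intro t ht
    have h1 : hlo g (e :: l) ≤ min 0 (g e) := hlo_cons_le_min g e l
    have h2 : hlo g (e :: l) ≤ g e + hlo g l := hlo_cons_le_add g e l
    show (e, (t + 1 + min 0 (g e)).toNat) :: liftFrom g (t + 1 + g e) l
        = (e, (t + min 0 (g e)).toNat + 1) :: (liftFrom g (t + g e) l).map (fun p => (p.1, p.2 + 1))
    have hnn : 0 ≤ t + min 0 (g e) := by omega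
    congr 1
    · congr 1; omega
    · have : t + 1 + g e = t + g e + 1 := by ring
      rw [this]; exact ih (t + g e) (by omega)

theorem liftW_shift (g : E → ℤ) (l : List E) (i : ℕ) :
    liftW g l (i + 1) = (liftW g l i).map (fun p => (p.1, p.2 + 1)) := by
  unfold liftW
  have hmin : min 0 (hlo g l) = hlo g l := min_eq_right (hlo_nonpos g l)
  have hco : (((i : ℕ) + 1 : ℕ) : ℤ) - min 0 (hlo g l) = ((i : ℤ) - min 0 (hlo g l)) + 1 := by
    push_cast; ring
  rw [hco]
  exact liftFrom_shift g l _ (by rw [hmin]; omega)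

theorem liftW_bounds (g : E → ℤ) (l : List E) (i : ℕ) :
    ∀ p ∈ liftW g l i, (i : ℤ) ≤ (p.2 : ℤ) ∧ (p.2 : ℤ) ≤ (i : ℤ) + spreadOf g l := by
  intro p hp
  have hmin : min 0 (hlo g l) = hlo g l := min_eq_right (hlo_nonpos g l)
  have := liftFrom_bounds g l ((i : ℤ) - min 0 (hlo g l)) (by rw [hmin]; omega) p hp
  unfold spreadOf
  omega

variable [DecidableEq E]

theorem count_liftW_shift (g : E → ℤ) (l : List E) (i : ℕ) (σ : E) (ℓ : ℕ) :
    (liftW g l (i + 1)).count (σ, ℓ + 1) = (liftW g l i).count (σ, ℓ) := by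
  rw [liftW_shift]
  generalize liftW g l i = L
  induction L with
  | nil => rfl
  | cons q L ih =>
    simp only [List.map_cons, List.count_cons, ih]
    congr 1
    simp only [beq_iff_eq, Prod.ext_iff]
    simp

theorem count_liftW_lt (g : E → ℤ) (l : List E) (i : ℕ) (σ : E) (ℓ : ℕ) (h : ℓ < i) :
    (liftW g l i).count (σ, ℓ) = 0 := by
  rw [List.count_eq_zero]
  intro hmem
  have := liftW_bounds g l i (σ, ℓ) hmem
  simp only at this
  omega

theorem count_liftW_ge (g : E → ℤ) (l : List E) (σ : E) :
    ∀ (i : ℕ) (ℓ : ℕ), i ≤ ℓ →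
      (liftW g l i).count (σ, ℓ) = (liftW g l 0).count (σ, ℓ - i) := by
  intro i
  induction i with
  | zero => intro ℓ _; rfl
  | succ i ih =>
    intro ℓ hle
    obtain ⟨ℓ', rfl⟩ : ∃ ℓ', ℓ = ℓ' + 1 := ⟨ℓ - 1, by omega⟩
    rw [count_liftW_shift, ih ℓ' (by omega)]
    have he : ℓ' + 1 - (i + 1) = ℓ' - i := by omega
    rw [he]

theorem count_liftW_gt_spread (g : E → ℤ) (l : List E) (σ : E) (j : ℕ)
    (h : (spreadOf g l).toNat < j) : (liftW g l 0).count (σ, j) = 0 := by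
  rw [List.count_eq_zero]
  intro hmem
  have := liftW_bounds g l 0 (σ, j) hmem
  simp only at this
  have hs := spread_nonneg g l
  omega

theorem sum_counts (σ : E) :
    ∀ (L : List (E × ℕ)) (K : ℕ), (∀ p ∈ L, p.2 < K) →
      (∑ j ∈ Finset.range K, L.count (σ, j)) = (L.map Prod.fst).count σ := by
  intro L
  induction L with
  | nil => intro K _; simp
  | cons q L ih =>
    intro K hK
    have hq2 : q.2 < K := hK q (List.mem_cons_self)
    have hstep : ∀ j, (q :: L).count (σ, j) = L.count (σ, j) + if q = (σ, j) then 1 else 0 := by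
      intro j
      rw [List.count_cons]
      congr 1
      simp only [beq_iff_eq]
    calc (∑ j ∈ Finset.range K, (q :: L).count (σ, j))
        = (∑ j ∈ Finset.range K, (L.count (σ, j) + if q = (σ, j) then 1 else 0)) := by
          exact Finset.sum_congr rfl fun j _ => hstep j
      _ = (∑ j ∈ Finset.range K, L.count (σ, j))
          + (∑ j ∈ Finset.range K, if q = (σ, j) then 1 else 0) := Finset.sum_add_distrib
      _ = (L.map Prod.fst).count σ + if q.1 = σ then 1 else 0 := by
          rw [ih K (fun p hp => hK p (List.mem_cons_of_mem _ hp))]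
          congr 1
          by_cases hqs : q.1 = σ
          · have : ∀ j, (q = (σ, j)) ↔ (j = q.2) := by
              intro j
              constructor
              · intro h; rw [h]
              · intro h; subst h; rw [← hqs]
            rw [Finset.sum_congr rfl fun j _ => by rw [if_congr (this j) rfl rfl]]
            rw [Finset.sum_ite_eq' (Finset.range K) q.2 (fun _ => 1)]
            simp [Finset.mem_range.2 hq2, hqs]
          · have : ∀ j, ¬(q = (σ, j)) := by
              intro j hc; apply hqs; rw [hc]
            simp [this, hqs]
      _ = ((q :: L).map Prod.fst).count σ := by
          rw [List.map_cons, List.count_cons]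
          congr 1
          simp only [beq_iff_eq]

theorem sum_map_range' (f : ℕ → ℕ) : ∀ (n s : ℕ),
    (((List.range' s n).map f).sum) = ∑ k ∈ Finset.range n, f (s + k) := by
  intro n
  induction n with
  | zero => intro s; simp
  | succ n ih =>
    intro s
    rw [List.range'_succ, List.map_cons, List.sum_cons, ih (s + 1),
      Finset.sum_range_succ' (fun k => f (s + k)) n]
    simp only [add_zero]
    rw [add_comm]
    congr 1
    exact Finset.sum_congr rfl fun k _ => by congr 1; omega

theorem key_count (g : E → ℤ) (B : List E) (θ₁ n : ℕ) (σ : E) (ℓ : ℕ)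
    (hl : θ₁ + (spreadOf g B).toNat ≤ ℓ) (hr : ℓ < θ₁ + n) :
    ((((List.range' θ₁ n).map (fun i => liftW g B i)).flatten).count (σ, ℓ)) = B.count σ := by
  set h : ℕ := (spreadOf g B).toNat with hh
  obtain ⟨r, rfl⟩ : ∃ r, ℓ = θ₁ + r := ⟨ℓ - θ₁, by omega⟩
  have hhr : h ≤ r := by omega
  have hrn : r < n := by omega
  set d : ℕ → ℕ := fun j => (liftW g B 0).count (σ, j) with hd
  rw [List.count_flatten, List.map_map]
  have : (List.map ((fun L => L.count (σ, θ₁ + r)) ∘ fun i => liftW g B i) (List.range' θ₁ n)).sum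
      = ∑ k ∈ Finset.range n, (liftW g B (θ₁ + k)).count (σ, θ₁ + r) :=
    sum_map_range' (fun i => (liftW g B i).count (σ, θ₁ + r)) n θ₁
  rw [this]
  have hterm : ∀ k ∈ Finset.range n,
      (liftW g B (θ₁ + k)).count (σ, θ₁ + r) = if k ≤ r then d (r - k) else 0 := by
    intro k _
    by_cases hk : k ≤ r
    · rw [if_pos hk, count_liftW_ge g B σ (θ₁ + k) (θ₁ + r) (by omega)]
      have he : θ₁ + r - (θ₁ + k) = r - k := by omega
      rw [he]
    · rw [if_neg hk]
      exact count_liftW_lt g B (θ₁ + k) σ (θ₁ + r) (by omega)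
  rw [Finset.sum_congr rfl hterm]
  have hsub : Finset.range (r + 1) ⊆ Finset.range n := Finset.range_subset_range.2 (by omega)
  rw [← Finset.sum_subset hsub (by
    intro k _ hk
    rw [Finset.mem_range] at hk
    rw [if_neg (by omega)])]
  have : (∑ k ∈ Finset.range (r + 1), if k ≤ r then d (r - k) else 0)
      = ∑ k ∈ Finset.range (r + 1), d (r - k) := by
    refine Finset.sum_congr rfl fun k hk => ?_
    rw [Finset.mem_range] at hk
    rw [if_pos (by omega)]
  rw [this]
  have hrefl := Finset.sum_range_reflect d (r + 1)
  simp only [Nat.add_sub_cancel] at hrefl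
  rw [hrefl]
  have hsub2 : Finset.range (h + 1) ⊆ Finset.range (r + 1) := Finset.range_subset_range.2 (by omega)
  rw [← Finset.sum_subset hsub2 (by
    intro j _ hj
    rw [Finset.mem_range] at hj
    exact count_liftW_gt_spread g B σ j (by omega))]
  have hlay : ∀ p ∈ liftW g B 0, p.2 < h + 1 := by
    intro p hp
    have := liftW_bounds g B 0 p hp
    have hs := spread_nonneg g B
    omega
  rw [sum_counts σ (liftW g B 0) (h + 1) hlay]
  unfold liftW
  rw [liftFrom_map_fst]

end AuxLemmas

theorem sumLawfulBEq {α β : Type*} [BEq α] [BEq β] [LawfulBEq α] [LawfulBEq β] :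
    LawfulBEq (α ⊕ β) where
  eq_of_beq {a b} h := by
    cases a <;> cases b <;> simp_all [show ∀ (x y : α), ((Sum.inl x : α ⊕ β) == Sum.inl y) = (x == y) from fun _ _ => rfl,
      show ∀ (x y : β), ((Sum.inr x : α ⊕ β) == Sum.inr y) = (x == y) from fun _ _ => rfl,
      show ∀ (x : α) (y : β), ((Sum.inl x : α ⊕ β) == Sum.inr y) = false from fun _ _ => rfl,
      show ∀ (x : β) (y : α), ((Sum.inr x : α ⊕ β) == Sum.inl y) = false from fun _ _ => rfl]
  rfl {a} := by
    cases a <;> simp [show ∀ (x y : α), ((Sum.inl x : α ⊕ β) == Sum.inl y) = (x == y) from fun _ _ => rfl,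
      show ∀ (x y : β), ((Sum.inr x : α ⊕ β) == Sum.inr y) = (x == y) from fun _ _ => rfl]

theorem count_beq_congr {α : Type*} (i1 i2 : BEq α) (h1 : @LawfulBEq α i1) (h2 : @LawfulBEq α i2)
    (a : α) (l : List α) : @List.count α i1 a l = @List.count α i2 a l := by
  induction l with
  | nil => rfl
  | cons x xs ih =>
    rw [@List.count_cons α i1, @List.count_cons α i2, ih]
    congr 1
    by_cases hx : x = a
    · subst hx
      rw [if_pos (@ReflBEq.rfl α i1 h1.toReflBEq x), if_pos (@ReflBEq.rfl α i2 h2.toReflBEq x)]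
    · rw [if_neg (fun h => hx (@LawfulBEq.eq_of_beq α i1 h1 _ _ h)),
          if_neg (fun h => hx (@LawfulBEq.eq_of_beq α i2 h2 _ _ h))]

/-- Augmenting `f` simultaneously along all liftings `lift(B, i)`,
`i ∈ {θ₁, …, θ₂ − h}`, of a cycle `B` of `N_{φ(f)}` with `τ(B) = 0` and height `h`, each
by the residual capacity `m = u(B)`, yields a flow over time `f'` that is repeated during
`[θ₁ + h, θ₂ − h]` with projection `φ(f') = φ(f) + u(B)·χ^B`. -/
theorem augmenting_along_all_liftings {V A : Type*}
    [Fintype A] [DecidableEq V] [DecidableEq A] (N : FOTN V A) (hτ : ∀ a, N.τ a ≤ 1)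
    (f : A → ℕ → ℤ) (θ θ₁ θ₂ : ℕ)
    (hf : N.IsFlowOverTime f θ) (hrep : N.Repeated f θ₁ θ₂)
    (h1 : 1 ≤ θ₁) (h2 : θ₁ + 2 ≤ θ₂) (h3 : θ₂ + 1 ≤ θ)
    (p : V) (B : List (A ⊕ A)) (hB : N.IsResCycle (N.proj f θ₁) p B)
    (hτB : (B.map (resTT N.τ)).sum = 0)
    (hfit : θ₁ + (spreadOf (resTT N.τ) B).toNat ≤ θ₂ - (spreadOf (resTT N.τ) B).toNat)
    (m : ℤ) (hub : ∀ e ∈ B, m ≤ N.bCap (N.proj f θ₁) e)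
    (hmem : ∃ e ∈ B, N.bCap (N.proj f θ₁) e = m) :
    let h : ℕ := (spreadOf (resTT N.τ) B).toNat
    let allL : List ((A ⊕ A) × ℕ) :=
      ((List.range' θ₁ (θ₂ - h - θ₁ + 1)).map (fun i => liftW (resTT N.τ) B i)).flatten
    let f' : A → ℕ → ℤ := fun a ℓ =>
      f a ℓ + m * ((allL.count (Sum.inl a, ℓ) : ℤ) - (allL.count (Sum.inr a, ℓ) : ℤ))
    N.Repeated f' (θ₁ + h) (θ₂ - h) ∧
    (∀ a : A, N.proj f' (θ₁ + h) a
      = N.proj f θ₁ a + m * ((B.count (Sum.inl a) : ℤ) - (B.count (Sum.inr a) : ℤ))) := by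

  intro h allL f'
  have hfit' : θ₁ + h ≤ θ₂ - h := hfit
  have hcnt : ∀ (σ : A ⊕ A) (ℓ : ℕ), θ₁ + h ≤ ℓ → ℓ ≤ θ₂ - h →
      allL.count (σ, ℓ) = B.count σ := by
    intro σ ℓ ha hb
    have hk := key_count (resTT N.τ) B θ₁ (θ₂ - h - θ₁ + 1) σ ℓ ha (by omega)
    haveI hsl : LawfulBEq (A ⊕ A) := sumLawfulBEq
    exact Eq.trans (count_beq_congr _ _ inferInstance inferInstance _ _)
      (hk.trans (count_beq_congr _ _ inferInstance inferInstance _ _))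
  constructor
  · intro a ℓ hl1 hl2
    show f a ℓ + m * ((allL.count (Sum.inl a, ℓ) : ℤ) - (allL.count (Sum.inr a, ℓ) : ℤ))
       = f a (ℓ + 1) + m * ((allL.count (Sum.inl a, ℓ + 1) : ℤ) - (allL.count (Sum.inr a, ℓ + 1) : ℤ))
    rw [hcnt _ _ hl1 (le_of_lt hl2), hcnt _ _ hl1 (le_of_lt hl2),
        hcnt _ _ (by omega) hl2, hcnt _ _ (by omega) hl2,
        hrep a ℓ (by omega) (by omega)]
  · intro a
    show f a (θ₁ + h) + m * ((allL.count (Sum.inl a, θ₁ + h) : ℤ) - (allL.count (Sum.inr a, θ₁ + h) : ℤ))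
       = f a θ₁ + m * ((B.count (Sum.inl a) : ℤ) - (B.count (Sum.inr a) : ℤ))
    rw [hcnt _ _ le_rfl hfit', hcnt _ _ le_rfl hfit']
    have hrepk : ∀ k : ℕ, θ₁ + k ≤ θ₂ → f a (θ₁ + k) = f a θ₁ := by
      intro k
      induction k with
      | zero => intro _; rfl
      | succ k ih =>
        intro hk
        have h1 : f a (θ₁ + k) = f a (θ₁ + k + 1) := hrep a (θ₁ + k) (by omega) (by omega)
        rw [show θ₁ + (k + 1) = θ₁ + k + 1 from rfl, ← h1]
        exact ih (by omega)
    rw [hrepk h (by omega)]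
end

section
/- Let x and x' be flows in a network N with x' = x + χ^B for a cycle B in N_x, and let B' be any cycle in N_{x'}. Then the multigraph obtained from the disjoint union of the arcs of B and B' by cancelling opposite arc pairs is Eulerian, every arc of it is a residual arc of N_x, and consequently there exist cycles B₁, ..., B_ℓ in N_x with Σ_j τ(B_j) = τ(B) + τ(B') and Σ_j c(B_j) = c(B) + c(B'). -/
/-- A network: a directed multigraph with a source, a sink and integral arc capacities. -/
structure Network (V A : Type*) where
  tail : A → V
  head : A → V
  s : V
  t : V
  u : A → ℤ

namespace Network
variable {V A : Type*} (N : Network V A)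

/-- Tail of a residual arc: `Sum.inl a` is the forward copy of `a`, `Sum.inr a` backward. -/
def resTail : A ⊕ A → V := Sum.elim N.tail N.head

def resHead : A ⊕ A → V := Sum.elim N.head N.tail

/-- Residual capacity of a residual arc with respect to a flow `x`. -/
def resCap (x : A → ℤ) : A ⊕ A → ℤ := Sum.elim (fun a => N.u a - x a) x

/-- A walk in the residual network `N_x`. -/
def IsResWalk (x : A → ℤ) (p q : V) (l : List (A ⊕ A)) : Prop :=
  ArcChain N.resTail N.resHead p q l ∧ ∀ e ∈ l, 0 < N.resCap x e

/-- A cycle in the residual network `N_x`. -/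
def IsResCycle (x : A → ℤ) (p : V) (l : List (A ⊕ A)) : Prop :=
  N.IsResWalk x p p l ∧ l ≠ [] ∧ (l.map N.resHead).Nodup

/-- A feasible static `s`-`t` flow: capacities and conservation at intermediate nodes. -/
def Feasible [Fintype A] [DecidableEq V] (x : A → ℤ) : Prop :=
  (∀ a, 0 ≤ x a ∧ x a ≤ N.u a) ∧
  ∀ v, v ≠ N.s → v ≠ N.t →
    (∑ a : A, if N.head a = v then x a else 0) = (∑ a : A, if N.tail a = v then x a else 0)

/-- The value of a flow: net outflow of the source. -/
def value [Fintype A] [DecidableEq V] (x : A → ℤ) : ℤ :=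
  (∑ a : A, if N.tail a = N.s then x a else 0) - (∑ a : A, if N.head a = N.s then x a else 0)

/-- A maximum `s`-`t` flow: feasible and of maximal value. -/
def IsMaxFlow [Fintype A] [DecidableEq V] (x : A → ℤ) : Prop :=
  N.Feasible x ∧ ∀ y : A → ℤ, N.Feasible y → N.value y ≤ N.value x

/-- Reachability in the residual network `N_x`. -/
def ResReach (x : A → ℤ) : V → V → Prop :=
  Relation.ReflTransGen
    (fun p q => ∃ e : A ⊕ A, 0 < N.resCap x e ∧ N.resTail e = p ∧ N.resHead e = q)

end Network

/-- The opposite of a residual arc. -/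
def oppArc {A : Type*} : A ⊕ A → A ⊕ A := Sum.elim (fun a => Sum.inr a) (fun a => Sum.inl a)

lemma card_ite_single {E : Type*} (P : Prop) [Decidable P] (e : E) :
    Multiset.card (if P then ({e} : Multiset E) else 0) = if P then 1 else 0 := by
  split_ifs <;> simp

section AuxChain

variable {W E : Type*} (tl hd : E → W)

lemma arcChain_append {p q r : W} {l₁ l₂ : List E} (h₁ : ArcChain tl hd p q l₁)
    (h₂ : ArcChain tl hd q r l₂) : ArcChain tl hd p r (l₁ ++ l₂) := by
  induction l₁ generalizing p with
  | nil => cases h₁; simpa using h₂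
  | cons e t ih => exact ⟨h₁.1, ih h₁.2⟩

lemma arcChain_split {p q : W} {l₁ l₂ : List E} (h : ArcChain tl hd p q (l₁ ++ l₂)) :
    ∃ m, ArcChain tl hd p m l₁ ∧ ArcChain tl hd m q l₂ := by
  induction l₁ generalizing p with
  | nil => exact ⟨p, rfl, h⟩
  | cons e t ih =>
      obtain ⟨m, h1, h2⟩ := ih h.2
      exact ⟨m, ⟨h.1, h1⟩, h2⟩

lemma arcChain_count [DecidableEq W] {p q : W} {l : List E} (h : ArcChain tl hd p q l) (v : W) :
    ((↑l : Multiset E).filter (fun e => hd e = v)).card + (if p = v then 1 else 0)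
      = ((↑l : Multiset E).filter (fun e => tl e = v)).card + (if q = v then 1 else 0) := by
  induction l generalizing p with
  | nil =>
      have hpq : p = q := h
      subst hpq
      rfl
  | cons e t ih =>
      obtain ⟨hte, hch⟩ := h
      have hih := ih hch
      have hcoe : ((↑(e :: t) : Multiset E)) = e ::ₘ (↑t : Multiset E) := rfl
      rw [hcoe, Multiset.filter_cons, Multiset.filter_cons, Multiset.card_add,
        Multiset.card_add, card_ite_single, card_ite_single]
      subst hte
      split_ifs at hih ⊢ <;> omega

/-- Extract a cycle (nodup heads) from a closed walk, by walking along `l` with an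
accumulated simple path `acc` from `p` to `s`. -/
lemma extract_cycle [DecidableEq W] [DecidableEq E] :
    ∀ (l : List E) (s : W) (acc : List E) (p : W),
      ArcChain tl hd p s acc → (acc.map hd).Nodup → p ∉ acc.map hd →
      ArcChain tl hd s p l → (acc ≠ [] ∨ l ≠ []) →
      ∃ (p' : W) (C : List E), C ≠ [] ∧ ArcChain tl hd p' p' C ∧ (C.map hd).Nodup ∧
        (↑C : Multiset E) ≤ ↑acc + ↑l := by
  intro l
  induction l with
  | nil =>
      intro s acc p hacc hnd hpn hl hne
      have hsp : s = p := hl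
      refine ⟨p, acc, ?_, hsp ▸ hacc, hnd, by simp⟩
      rcases hne with h | h
      · exact h
      · exact absurd rfl h
  | cons e t ih =>
      intro s acc p hacc hnd hpn hl _
      obtain ⟨hte, hch⟩ := hl
      by_cases h1 : hd e = p
      · refine ⟨p, acc ++ [e], by simp, ?_, ?_, ?_⟩
        · exact arcChain_append tl hd hacc ⟨hte, h1⟩
        · rw [List.map_append]
          simp only [List.map_cons, List.map_nil]
          rw [List.nodup_append]
          exact ⟨hnd, List.nodup_singleton _, by simpa [h1] using hpn⟩
        · refine Multiset.le_iff_count.2 fun a => ?_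
          simp only [← Multiset.coe_count, Multiset.count_add, Multiset.coe_count,
            List.count_append, List.count_cons, List.count_nil]
          omega
      · by_cases h2 : hd e ∈ acc.map hd
        · obtain ⟨e', he'mem, he'⟩ := List.mem_map.1 h2
          obtain ⟨acc₁, acc₂, rfl⟩ := List.append_of_mem he'mem
          obtain ⟨m, _, hm2⟩ := arcChain_split tl hd hacc
          have hch2 : ArcChain tl hd (hd e') s acc₂ := hm2.2
          have hnd2 : ((e' :: acc₂).map hd).Nodup := by
            rw [List.map_append] at hnd
            exact hnd.of_append_right
          refine ⟨hd e', acc₂ ++ [e], by simp, ?_, ?_, ?_⟩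
          · exact arcChain_append tl hd hch2 ⟨hte, he'.symm⟩
          · rw [List.map_append]
            simp only [List.map_cons, List.map_nil]
            rw [List.nodup_append]
            refine ⟨(List.nodup_cons.1 (by simpa using hnd2)).2,
              List.nodup_singleton _, ?_⟩
            intro a ha b hb hab
            rw [List.mem_singleton] at hb
            subst hb hab
            rw [← he'] at ha
            exact (List.nodup_cons.1 (by simpa using hnd2)).1 ha
          · refine Multiset.le_iff_count.2 fun a => ?_
            simp only [← Multiset.coe_count, Multiset.count_add, Multiset.coe_count,
              List.count_append, List.count_cons, List.count_nil]
            omega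
        · have hacc' : ArcChain tl hd p (hd e) (acc ++ [e]) :=
            arcChain_append tl hd hacc ⟨hte, rfl⟩
          have hnd' : ((acc ++ [e]).map hd).Nodup := by
            rw [List.map_append]
            simp only [List.map_cons, List.map_nil]
            rw [List.nodup_append]
            refine ⟨hnd, List.nodup_singleton _, ?_⟩
            intro a ha b hb hab
            rw [List.mem_singleton] at hb
            subst hb hab
            exact h2 ha
          have hpn' : p ∉ (acc ++ [e]).map hd := by
            rw [List.map_append]
            simp only [List.mem_append, List.map_cons, List.map_nil, List.mem_singleton]
            rintro (h | h)
            · exact hpn h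
            · exact h1 h.symm
          obtain ⟨p', C, hC1, hC2, hC3, hC4⟩ :=
            ih (hd e) (acc ++ [e]) p hacc' hnd' hpn' hch (Or.inl (by simp))
          refine ⟨p', C, hC1, hC2, hC3, ?_⟩
          refine hC4.trans (Multiset.le_iff_count.2 fun a => ?_)
          simp only [← Multiset.coe_count, Multiset.count_add, Multiset.coe_count,
            List.count_append, List.count_cons, List.count_nil]
          omega

end AuxChain

section AuxNet

variable {V A : Type*} [DecidableEq V] [DecidableEq A] (N : Network V A)

/-- Greedy trail: if out-degree minus in-degree is `[v=cur] - [v=s]` everywhere, there is a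
walk from `cur` to `s` using arcs of `M`. -/
lemma exists_walk :
    ∀ (n : ℕ) (M : Multiset (A ⊕ A)) (cur s : V), M.card ≤ n →
      (∀ v, (M.filter (fun e => N.resTail e = v)).card + (if s = v then 1 else 0)
          = (M.filter (fun e => N.resHead e = v)).card + (if cur = v then 1 else 0)) →
      ∃ l : List (A ⊕ A), ArcChain N.resTail N.resHead cur s l ∧ (↑l : Multiset (A ⊕ A)) ≤ M := by
  intro n
  induction n with
  | zero =>
      intro M cur s hc hbal
      have hM : M = 0 := Multiset.card_eq_zero.1 (Nat.le_zero.1 hc)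
      subst hM
      have h0 := hbal cur
      simp only [Multiset.filter_zero, Multiset.card_zero, zero_add] at h0
      have hcs : cur = s := by
        by_contra hne
        rw [if_neg (fun h => hne h.symm)] at h0
        simp at h0
      exact ⟨[], hcs.symm ▸ rfl, by simp⟩
  | succ n ih =>
      intro M cur s hc hbal
      by_cases hcs : cur = s
      · exact ⟨[], hcs ▸ rfl, by simp⟩
      · have hout : 0 < (M.filter (fun e => N.resTail e = cur)).card := by
          have h0 := hbal cur
          rw [if_neg (fun h => hcs h.symm), if_pos rfl] at h0
          omega
        obtain ⟨e, he⟩ := Multiset.card_pos_iff_exists_mem.1 hout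
        have heM : e ∈ M := Multiset.mem_of_mem_filter he
        have hte : N.resTail e = cur := (Multiset.mem_filter.1 he).2
        have hMe : M = e ::ₘ M.erase e := (Multiset.cons_erase heM).symm
        have hbal' : ∀ v, ((M.erase e).filter (fun a => N.resTail a = v)).card
              + (if s = v then 1 else 0)
            = ((M.erase e).filter (fun a => N.resHead a = v)).card
              + (if N.resHead e = v then 1 else 0) := by
          intro v
          have h0 := hbal v
          rw [hMe, Multiset.filter_cons, Multiset.filter_cons, Multiset.card_add,
            Multiset.card_add, card_ite_single, card_ite_single, hte] at h0
          split_ifs at h0 ⊢ <;> omega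
        have hcard : (M.erase e).card ≤ n := by
          have := Multiset.card_erase_lt_of_mem heM
          omega
        obtain ⟨l, hl1, hl2⟩ := ih (M.erase e) (N.resHead e) s hcard hbal'
        refine ⟨e :: l, ⟨hte, hl1⟩, ?_⟩
        have hco : (↑(e :: l) : Multiset (A ⊕ A)) = e ::ₘ ↑l := rfl
        rw [hco, hMe]
        exact Multiset.cons_le_cons e hl2

/-- Decomposition of a balanced multiset of residual arcs into residual cycles. -/
lemma decompose (x : A → ℤ) :
    ∀ (n : ℕ) (Hm : Multiset (A ⊕ A)), Hm.card ≤ n →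
      (∀ v, (Hm.filter (fun e => N.resHead e = v)).card
          = (Hm.filter (fun e => N.resTail e = v)).card) →
      (∀ e ∈ Hm, 0 < N.resCap x e) →
      ∃ cs : List (V × List (A ⊕ A)),
        (∀ pr ∈ cs, N.IsResCycle x pr.1 pr.2) ∧
        (cs.map (fun pr => ((pr.2 : Multiset (A ⊕ A))))).sum = Hm := by
  intro n
  induction n with
  | zero =>
      intro Hm hc _ _
      have : Hm = 0 := Multiset.card_eq_zero.1 (Nat.le_zero.1 hc)
      exact ⟨[], by simp, by simp [this]⟩
  | succ n ih =>
      intro Hm hc hbal hres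
      rcases eq_or_ne Hm 0 with hM | hM
      · exact ⟨[], by simp, by simp [hM]⟩
      obtain ⟨e, heM⟩ := Multiset.exists_mem_of_ne_zero hM
      have hMe : Hm = e ::ₘ Hm.erase e := (Multiset.cons_erase heM).symm
      have hbal' : ∀ v, ((Hm.erase e).filter (fun a => N.resTail a = v)).card
            + (if N.resTail e = v then 1 else 0)
          = ((Hm.erase e).filter (fun a => N.resHead a = v)).card
            + (if N.resHead e = v then 1 else 0) := by
        intro v
        have h0 := hbal v
        rw [hMe, Multiset.filter_cons, Multiset.filter_cons, Multiset.card_add,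
          Multiset.card_add, card_ite_single, card_ite_single] at h0
        split_ifs at h0 ⊢ <;> omega
      obtain ⟨l, hl1, hl2⟩ := exists_walk N n (Hm.erase e) (N.resHead e) (N.resTail e)
        (by have := Multiset.card_erase_lt_of_mem heM; omega) hbal'
      have hclosed : ArcChain N.resTail N.resHead (N.resTail e) (N.resTail e) (e :: l) :=
        ⟨rfl, hl1⟩
      obtain ⟨p', C, hC1, hC2, hC3, hC4⟩ := extract_cycle N.resTail N.resHead (e :: l)
        (N.resTail e) [] (N.resTail e) rfl (by simp) (by simp) hclosed (Or.inr (by simp))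
      have hCHm : (↑C : Multiset (A ⊕ A)) ≤ Hm := by
        refine hC4.trans ?_
        have hco : (↑(e :: l) : Multiset (A ⊕ A)) = e ::ₘ ↑l := rfl
        rw [Multiset.coe_nil, zero_add, hco, hMe]
        exact Multiset.cons_le_cons e hl2
      set H' := Hm - ↑C with hH'
      have hHm : H' + ↑C = Hm := tsub_add_cancel_of_le hCHm
      have hbal'' : ∀ v, (H'.filter (fun a => N.resHead a = v)).card
          = (H'.filter (fun a => N.resTail a = v)).card := by
        intro v
        have h1 := hbal v
        have h2 := arcChain_count N.resTail N.resHead hC2 v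
        rw [← hHm, Multiset.filter_add, Multiset.filter_add, Multiset.card_add,
          Multiset.card_add] at h1
        omega
      have hres' : ∀ a ∈ H', 0 < N.resCap x a := fun a ha =>
        hres a (Multiset.mem_of_le (tsub_le_self) ha)
      have hcard' : H'.card ≤ n := by
        have h1 : H'.card + (↑C : Multiset (A ⊕ A)).card = Hm.card := by
          rw [← hHm, Multiset.card_add]
        have h2 : 0 < (↑C : Multiset (A ⊕ A)).card := by
          rw [Multiset.coe_card]
          exact List.length_pos_iff.2 hC1
        omega
      obtain ⟨cs, hcs1, hcs2⟩ := ih H' hcard' hbal'' hres'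
      refine ⟨(p', C) :: cs, ?_, ?_⟩
      · rintro pr hpr
        rcases List.mem_cons.1 hpr with rfl | h
        · exact ⟨⟨hC2, fun a ha =>
            hres a (Multiset.mem_of_le hCHm (Multiset.mem_coe.2 ha))⟩, hC1, hC3⟩
        · exact hcs1 pr h
      · simp only [List.map_cons, List.sum_cons, hcs2]
        rw [add_comm]
        exact hHm

end AuxNet

lemma oppArc_oppArc {A : Type*} (e : A ⊕ A) : oppArc (oppArc e) = e := by
  cases e <;> rfl

lemma oppArc_injective {A : Type*} : Function.Injective (oppArc (A := A)) := by
  intro a b h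
  have := congrArg oppArc h
  rwa [oppArc_oppArc, oppArc_oppArc] at this

lemma sum_over_cs {V A : Type*} (g : A ⊕ A → ℤ) :
    ∀ (cs : List (V × List (A ⊕ A))),
      (cs.map (fun pr => ((pr.2).map g).sum)).sum
        = (((cs.map (fun pr => ((pr.2 : Multiset (A ⊕ A))))).sum).map g).sum := by
  intro cs
  induction cs with
  | nil => simp
  | cons a t ih => simp [ih]

lemma sum_beq_eq {A : Type*} [DecidableEq A] (x y : A ⊕ A) :
    (x == y) = decide (x = y) := by
  cases x <;> cases y
  · show decide _ = _
    exact decide_eq_decide.2 (by simp)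
  · rfl
  · rfl
  · show decide _ = _
    exact decide_eq_decide.2 (by simp)

instance sumLawfulBEq_s19 {A : Type*} [DecidableEq A] : @LawfulBEq (A ⊕ A) Sum.instBEq where
  eq_of_beq {a b} h := by rw [sum_beq_eq] at h; exact of_decide_eq_true h
  rfl {a} := by rw [sum_beq_eq]; exact decide_eq_true rfl

/-- Let `x' = x + χ^B` for a cycle `B` of the residual network `N_x`, and let `B'` be any
cycle of `N_{x'}`. Then the multigraph obtained from the disjoint union of the arcs of `B`
and `B'` by cancelling opposite arc pairs is Eulerian, consists of residual arcs of `N_x`,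
and decomposes into cycles `B₁,…,B_ℓ` of `N_x` with `Σ τ(B_j) = τ(B) + τ(B')` and
`Σ c(B_j) = c(B) + c(B')`. -/
theorem union_of_cycles_decomposes_in_old_residual {V A : Type*}
    [Fintype A] [DecidableEq V] [DecidableEq A] (N : Network V A)
    (τ : A → ℕ) (c : A → ℤ) (x : A → ℤ)
    (p : V) (B : List (A ⊕ A)) (hB : N.IsResCycle x p B)
    (p' : V) (B' : List (A ⊕ A))
    (hB' : N.IsResCycle
      (fun a => x a + ((B.count (Sum.inl a) : ℤ) - (B.count (Sum.inr a) : ℤ))) p' B') :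
    ∃ Hm K : Multiset (A ⊕ A),
      (B : Multiset (A ⊕ A)) + (B' : Multiset (A ⊕ A)) = Hm + K + K.map oppArc ∧
      (∀ v : V, (Hm.filter (fun e => N.resHead e = v)).card
              = (Hm.filter (fun e => N.resTail e = v)).card) ∧
      (∀ e ∈ Hm, 0 < N.resCap x e) ∧
      ∃ cs : List (V × List (A ⊕ A)),
        (∀ pr ∈ cs, N.IsResCycle x pr.1 pr.2) ∧
        (cs.map (fun pr => ((pr.2 : Multiset (A ⊕ A))))).sum = Hm ∧
        (cs.map (fun pr => ((pr.2).map (resTT τ)).sum)).sum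
          = (B.map (resTT τ)).sum + (B'.map (resTT τ)).sum ∧
        (cs.map (fun pr => ((pr.2).map (resC c)).sum)).sum
          = (B.map (resC c)).sum + (B'.map (resC c)).sum := by
  classical
  obtain ⟨⟨hBchain, hBres⟩, hBne, hBnd⟩ := hB
  obtain ⟨⟨hB'chain, hB'res⟩, hB'ne, hB'nd⟩ := hB'
  have hBnodup : B.Nodup := hBnd.of_map
  have hB'nodup : B'.Nodup := hB'nd.of_map
  set K : Multiset (A ⊕ A) := (↑B' : Multiset (A ⊕ A)).filter (fun e => N.resCap x e ≤ 0)
    with hKdef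
  set F : Multiset (A ⊕ A) := (↑B' : Multiset (A ⊕ A)).filter (fun e => ¬ N.resCap x e ≤ 0)
    with hFdef
  have hKF : K + F = (↑B' : Multiset (A ⊕ A)) := Multiset.filter_add_not _ _
  -- opposite arcs of K lie in B
  have hopp : ∀ e ∈ K, oppArc e ∈ (↑B : Multiset (A ⊕ A)) := by
    intro e he
    have heB' : e ∈ (↑B' : Multiset (A ⊕ A)) := Multiset.mem_of_mem_filter he
    have hcap : N.resCap x e ≤ 0 := (Multiset.mem_filter.1 he).2
    have hcap' : 0 < N.resCap
        (fun a => x a + ((B.count (Sum.inl a) : ℤ) - (B.count (Sum.inr a) : ℤ))) e :=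
      hB'res e (by exact_mod_cast heB')
    cases e with
    | inl a =>
        simp only [Network.resCap, Sum.elim_inl] at hcap hcap'
        have hcnt : 0 < B.count (Sum.inr a) := by omega
        exact Multiset.mem_coe.2 (List.count_pos_iff.1 hcnt)
    | inr a =>
        simp only [Network.resCap, Sum.elim_inr] at hcap hcap'
        have hcnt : 0 < B.count (Sum.inl a) := by omega
        exact Multiset.mem_coe.2 (List.count_pos_iff.1 hcnt)
  have hKnodup : K.Nodup := Multiset.Nodup.filter _ (by exact_mod_cast hB'nodup)
  have hKopp : K.map oppArc ≤ (↑B : Multiset (A ⊕ A)) := by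
    rw [Multiset.le_iff_subset (hKnodup.map oppArc_injective)]
    intro e he
    obtain ⟨a, ha, rfl⟩ := Multiset.mem_map.1 he
    exact hopp a ha
  set Hm : Multiset (A ⊕ A) := ((↑B : Multiset (A ⊕ A)) - K.map oppArc) + F with hHmdef
  have hmain : (↑B : Multiset (A ⊕ A)) + (↑B' : Multiset (A ⊕ A))
      = Hm + K + K.map oppArc := by
    have e1 : (↑B : Multiset (A ⊕ A)) = ((↑B : Multiset (A ⊕ A)) - K.map oppArc)
        + K.map oppArc := (tsub_add_cancel_of_le hKopp).symm
    have e2 : (↑B' : Multiset (A ⊕ A)) = K + F := hKF.symm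
    rw [hHmdef]
    conv_lhs => rw [e1, e2]
    generalize (↑B : Multiset (A ⊕ A)) - Multiset.map oppArc K = D
    abel
  -- head/tail of opposite arcs
  have hhopp : ∀ e : A ⊕ A, N.resHead (oppArc e) = N.resTail e := by
    intro e; cases e <;> rfl
  have htopp : ∀ e : A ⊕ A, N.resTail (oppArc e) = N.resHead e := by
    intro e; cases e <;> rfl
  have hKoppH : ∀ v, ((K.map oppArc).filter (fun e => N.resHead e = v)).card
      = (K.filter (fun e => N.resTail e = v)).card := by
    intro v
    rw [Multiset.filter_map, Multiset.card_map]
    congr 1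
    exact Multiset.filter_congr (fun a _ => by rw [Function.comp_apply, hhopp])
  have hKoppT : ∀ v, ((K.map oppArc).filter (fun e => N.resTail e = v)).card
      = (K.filter (fun e => N.resHead e = v)).card := by
    intro v
    rw [Multiset.filter_map, Multiset.card_map]
    congr 1
    exact Multiset.filter_congr (fun a _ => by rw [Function.comp_apply, htopp])
  have hBbal : ∀ v, ((↑B : Multiset (A ⊕ A)).filter (fun e => N.resHead e = v)).card
      = ((↑B : Multiset (A ⊕ A)).filter (fun e => N.resTail e = v)).card := by
    intro v
    have := arcChain_count N.resTail N.resHead hBchain v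
    omega
  have hB'bal : ∀ v, ((↑B' : Multiset (A ⊕ A)).filter (fun e => N.resHead e = v)).card
      = ((↑B' : Multiset (A ⊕ A)).filter (fun e => N.resTail e = v)).card := by
    intro v
    have := arcChain_count N.resTail N.resHead hB'chain v
    omega
  have hbalHm : ∀ v, (Hm.filter (fun e => N.resHead e = v)).card
      = (Hm.filter (fun e => N.resTail e = v)).card := by
    intro v
    have h1 := hBbal v
    have h2 := hB'bal v
    have h3 := congrArg (fun s => (Multiset.filter (fun e => N.resHead e = v) s).card) hmain
    have h4 := congrArg (fun s => (Multiset.filter (fun e => N.resTail e = v) s).card) hmain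
    simp only [Multiset.filter_add, Multiset.card_add] at h3 h4
    have h5 := hKoppH v
    have h6 := hKoppT v
    omega
  have hresHm : ∀ e ∈ Hm, 0 < N.resCap x e := by
    intro e he
    rcases Multiset.mem_add.1 he with h | h
    · have heB : e ∈ (↑B : Multiset (A ⊕ A)) :=
        Multiset.mem_of_le (Multiset.sub_le_self _ _) h
      exact hBres e (by exact_mod_cast heB)
    · have := (Multiset.mem_filter.1 h).2
      omega
  obtain ⟨cs, hcs1, hcs2⟩ := decompose N x Hm.card Hm le_rfl hbalHm hresHm
  have hsum : ∀ g : A ⊕ A → ℤ, (∀ e, g (oppArc e) = -g e) →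
      (Hm.map g).sum = (B.map g).sum + (B'.map g).sum := by
    intro g hg
    have h1 := congrArg (fun s => (Multiset.map g s).sum) hmain
    simp only [Multiset.map_add, Multiset.sum_add] at h1
    have h2 : ((K.map oppArc).map g).sum = -(K.map g).sum := by
      rw [Multiset.map_map]
      simp only [Function.comp_def, hg]
      simp [Multiset.sum_map_neg']
    have h3 : ((↑B : Multiset (A ⊕ A)).map g).sum = (B.map g).sum := by simp
    have h4 : ((↑B' : Multiset (A ⊕ A)).map g).sum = (B'.map g).sum := by simp
    rw [h3, h4, h2] at h1
    omega
  refine ⟨Hm, K, hmain, hbalHm, hresHm, cs, hcs1, hcs2, ?_, ?_⟩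
  · rw [sum_over_cs, hcs2, hsum _ (fun e => by cases e <;> simp [resTT, oppArc])]
  · rw [sum_over_cs, hcs2, hsum _ (fun e => by cases e <;> simp [resC, oppArc])]
end
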